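/- Let a, b be nonzero integers. The self-map of the unit sphere S³ ⊂ ℂ² given by normalizing (z, w) ↦ (z^a', w^b'), where z^{a'} denotes z^a if a > 0 and conj(z)^{|a|} if a < 0 (similarly for b), has topological degree a·b. -/

import Mathlib

/-- `zPow n z` is `z^n` for `n > 0` and `conj(z)^{|n|}` for `n < 0`. -/
noncomputable def zPow (n : ℤ) (z : ℂ) : ℂ :=
  if 0 ≤ n then z ^ n.toNat else (starRingEnd ℂ z) ^ (-n).toNat

lemma zPow_of_nonneg {n : ℤ} (h : 0 ≤ n) (z : ℂ) : zPow n z = z ^ n.natAbs := by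
  rw [zPow, if_pos h]
  congr 1
  omega

lemma zPow_of_neg {n : ℤ} (h : n < 0) (z : ℂ) :
    zPow n z = (starRingEnd ℂ z) ^ n.natAbs := by
  rw [zPow, if_neg (not_le.2 h)]
  congr 1
  omega

lemma zPow_one (z : ℂ) : zPow 1 z = z := by simp [zPow]

@[fun_prop] lemma zPow_cont (n : ℤ) : Continuous (zPow n) := by
  unfold zPow
  split_ifs
  · exact continuous_pow _
  · exact (Complex.continuous_conj.pow _)

lemma zPow_ne_zero (n : ℤ) {z : ℂ} (hz : z ≠ 0) : zPow n z ≠ 0 := by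
  unfold zPow
  split_ifs
  · exact pow_ne_zero _ hz
  · exact pow_ne_zero _ (by simpa using hz)

lemma zPow_real_mul (n : ℤ) (r : ℝ) (z : ℂ) :
    zPow n ((r : ℂ) * z) = (r : ℂ) ^ n.natAbs * zPow n z := by
  rcases le_or_gt 0 n with h | h
  · rw [zPow_of_nonneg h, zPow_of_nonneg h, mul_pow]
  · rw [zPow_of_neg h, zPow_of_neg h, map_mul, Complex.conj_ofReal, mul_pow]

lemma zPow_zPow (a b : ℤ) (z : ℂ) (ha : a ≠ 0) (hb : b ≠ 0) :
    zPow a (zPow b z) = zPow (a * b) z := by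
  rcases lt_or_gt_of_ne ha with ha' | ha' <;> rcases lt_or_gt_of_ne hb with hb' | hb'
  · rw [zPow_of_neg hb', zPow_of_neg ha', zPow_of_nonneg (le_of_lt (mul_pos_of_neg_of_neg ha' hb'))]
    rw [map_pow, Complex.conj_conj, ← pow_mul, Int.natAbs_mul, Nat.mul_comm]
  · rw [zPow_of_nonneg hb'.le, zPow_of_neg ha', zPow_of_neg (by exact mul_neg_of_neg_of_pos ha' hb')]
    rw [map_pow, ← pow_mul, Int.natAbs_mul, Nat.mul_comm]
  · rw [zPow_of_neg hb', zPow_of_nonneg ha'.le, zPow_of_neg (mul_neg_of_pos_of_neg ha' hb')]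
    rw [← pow_mul, Int.natAbs_mul, Nat.mul_comm]
  · rw [zPow_of_nonneg hb'.le, zPow_of_nonneg ha'.le, zPow_of_nonneg (le_of_lt (mul_pos ha' hb'))]
    rw [← pow_mul, Int.natAbs_mul, Nat.mul_comm]

open Metric in
abbrev S3 := Metric.sphere (0 : ℂ × ℂ) 1

noncomputable def nval (x : ℂ × ℂ) : ℂ × ℂ := ‖x‖⁻¹ • x

lemma nval_mem {x : ℂ × ℂ} (hx : x ≠ 0) : nval x ∈ Metric.sphere (0 : ℂ × ℂ) 1 := by
  rw [mem_sphere_zero_iff_norm, nval, norm_smul, norm_inv, norm_norm,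
    inv_mul_cancel₀ (norm_ne_zero_iff.2 hx)]

lemma S3.norm_eq (v : S3) : ‖(v : ℂ × ℂ)‖ = 1 := mem_sphere_zero_iff_norm.1 v.2

lemma S3.ne_zero (v : S3) : (v : ℂ × ℂ) ≠ 0 :=
  fun h => by simpa [h] using S3.norm_eq v

lemma nval_of_norm_one {x : ℂ × ℂ} (hx : ‖x‖ = 1) : nval x = x := by
  rw [nval, hx]; simp

noncomputable def nmap (g : S3 → ℂ × ℂ) (hg : Continuous g) (h0 : ∀ v, g v ≠ 0) :
    C(S3, S3) :=
  ⟨fun v => ⟨nval (g v), nval_mem (h0 v)⟩, by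
    refine Continuous.subtype_mk ?_ _
    exact ((hg.norm.inv₀ fun v => norm_ne_zero_iff.2 (h0 v)).smul hg)⟩

lemma nmap_apply (g : S3 → ℂ × ℂ) (hg : Continuous g) (h0 : ∀ v, g v ≠ 0) (v : S3) :
    ((nmap g hg h0 v : S3) : ℂ × ℂ) = ‖g v‖⁻¹ • g v := rfl

lemma nmap_congr {g g' : S3 → ℂ × ℂ} (hg : Continuous g) (h0 : ∀ v, g v ≠ 0)
    (hg' : Continuous g') (h0' : ∀ v, g' v ≠ 0) (h : ∀ v, g v = g' v) :
    nmap g hg h0 = nmap g' hg' h0' := by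
  ext v : 1
  exact Subtype.ext (by rw [nmap_apply, nmap_apply, h v])

/-- Workhorse: normalized homotopy between endpoint maps. -/
lemma nhomotopic (G : ℝ → S3 → ℂ × ℂ)
    (hG : Continuous fun p : ℝ × S3 => G p.1 p.2)
    (h0 : ∀ t ∈ Set.Icc (0 : ℝ) 1, ∀ v, G t v ≠ 0)
    (hg0 : Continuous (G 0)) (hn0 : ∀ v, G 0 v ≠ 0)
    (hg1 : Continuous (G 1)) (hn1 : ∀ v, G 1 v ≠ 0) :
    (nmap (G 0) hg0 hn0).Homotopic (nmap (G 1) hg1 hn1) := by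
  refine ⟨⟨⟨fun p => ⟨nval (G p.1 p.2), nval_mem (h0 p.1 p.1.2 p.2)⟩, ?_⟩, ?_, ?_⟩⟩
  · refine Continuous.subtype_mk ?_ _
    have hc : Continuous fun p : unitInterval × S3 => G (p.1 : ℝ) p.2 :=
      hG.comp ((continuous_subtype_val.comp continuous_fst).prodMk continuous_snd)
    exact ((hc.norm.inv₀ fun p => norm_ne_zero_iff.2 (h0 p.1 p.1.2 p.2)).smul hc)
  · intro x; exact Subtype.ext (by simp [nmap_apply, nval])
  · intro x; exact Subtype.ext (by simp [nmap_apply, nval])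

noncomputable def Lmap (t : ℝ) (x : ℂ × ℂ) : ℂ × ℂ :=
  (Complex.exp ((Real.pi * t / 2 : ℝ) * Complex.I) *
      ((Real.cos (Real.pi * t / 2) : ℂ) * x.1 -
        Complex.I * (Real.sin (Real.pi * t / 2) : ℂ) * x.2),
   Complex.exp ((Real.pi * t / 2 : ℝ) * Complex.I) *
      (-Complex.I * (Real.sin (Real.pi * t / 2) : ℂ) * x.1 +
        (Real.cos (Real.pi * t / 2) : ℂ) * x.2))

lemma Lmap_cont : Continuous fun p : ℝ × (ℂ × ℂ) => Lmap p.1 p.2 := by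
  unfold Lmap
  fun_prop

lemma Lmap_cont_S (t : ℝ) : Continuous fun v : S3 => Lmap t (v : ℂ × ℂ) := by
  unfold Lmap
  fun_prop

lemma Lmap_cont_S2 : Continuous fun p : ℝ × S3 => Lmap p.1 (p.2 : ℂ × ℂ) := by
  unfold Lmap
  fun_prop

lemma Lmap_zero (x : ℂ × ℂ) : Lmap 0 x = x := by
  have h : Real.pi * 0 / 2 = 0 := by ring
  rw [Lmap, h]
  simp

lemma Lmap_one (x : ℂ × ℂ) : Lmap 1 x = (x.2, x.1) := by
  have h : Real.pi * 1 / 2 = Real.pi / 2 := by ring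
  have he : Complex.exp ((Real.pi / 2 : ℝ) * Complex.I) = Complex.I := by
    rw [Complex.exp_mul_I, ← Complex.ofReal_cos, ← Complex.ofReal_sin,
      Real.cos_pi_div_two, Real.sin_pi_div_two]
    simp
  rw [Lmap, h, he, Real.cos_pi_div_two, Real.sin_pi_div_two]
  refine Prod.ext ?_ ?_
  · show Complex.I * (((0:ℝ):ℂ) * x.1 - Complex.I * ((1:ℝ):ℂ) * x.2) = x.2
    push_cast
    linear_combination (-x.2) * Complex.I_sq
  · show Complex.I * (-Complex.I * ((1:ℝ):ℂ) * x.1 + ((0:ℝ):ℂ) * x.2) = x.1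
    push_cast
    linear_combination (-x.1) * Complex.I_sq

lemma Lmap_ne_zero (t : ℝ) {x : ℂ × ℂ} (hx : x ≠ 0) : Lmap t x ≠ 0 := by
  intro h
  rw [Lmap, Prod.mk_eq_zero] at h
  obtain ⟨h1, h2⟩ := h
  have he : Complex.exp ((Real.pi * t / 2 : ℝ) * Complex.I) ≠ 0 := Complex.exp_ne_zero _
  set c : ℂ := (Real.cos (Real.pi * t / 2) : ℂ) with hc
  set s : ℂ := (Real.sin (Real.pi * t / 2) : ℂ) with hs
  have h1' : c * x.1 - Complex.I * s * x.2 = 0 := by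
    rcases mul_eq_zero.1 h1 with h | h
    · exact absurd h he
    · exact h
  have h2' : -Complex.I * s * x.1 + c * x.2 = 0 := by
    rcases mul_eq_zero.1 h2 with h | h
    · exact absurd h he
    · exact h
  have hcs : c ^ 2 + s ^ 2 = 1 := by
    rw [hc, hs]
    exact_mod_cast Real.cos_sq_add_sin_sq (Real.pi * t / 2)
  have hx1 : x.1 = 0 := by
    linear_combination c * h1' + Complex.I * s * h2' - x.1 * hcs + s ^ 2 * x.1 * Complex.I_sq
  have hx2 : x.2 = 0 := by
    linear_combination Complex.I * s * h1' + c * h2' - x.2 * hcs + s ^ 2 * x.2 * Complex.I_sq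
  exact hx (Prod.ext_iff.2 ⟨by simpa using hx1, by simpa using hx2⟩)

lemma S3.not_both (v : S3) : ¬((v : ℂ × ℂ).1 = 0 ∧ (v : ℂ × ℂ).2 = 0) := by
  rintro ⟨h1, h2⟩
  exact S3.ne_zero v (Prod.ext_iff.2 ⟨by simpa using h1, by simpa using h2⟩)

lemma scaled_pair_ne {α β : ℝ} (hα : α ≠ 0) (hβ : β ≠ 0) (m n : ℤ) {x y : ℂ}
    (h : ¬(x = 0 ∧ y = 0)) :
    (((α : ℂ) * zPow m x, (β : ℂ) * zPow n y) : ℂ × ℂ) ≠ 0 := by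
  rw [Ne, Prod.mk_eq_zero]
  rintro ⟨h1, h2⟩
  rcases not_and_or.mp h with h' | h'
  · exact mul_ne_zero (Complex.ofReal_ne_zero.2 hα) (zPow_ne_zero m h') h1
  · exact mul_ne_zero (Complex.ofReal_ne_zero.2 hβ) (zPow_ne_zero n h') h2

lemma pair_ne (m n : ℤ) {x y : ℂ} (h : ¬(x = 0 ∧ y = 0)) :
    ((zPow m x, zPow n y) : ℂ × ℂ) ≠ 0 := by
  rw [Ne, Prod.mk_eq_zero]
  rintro ⟨h1, h2⟩
  rcases not_and_or.mp h with h' | h'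
  · exact zPow_ne_zero m h' h1
  · exact zPow_ne_zero n h' h2

lemma pair_ne' (m : ℤ) {x y : ℂ} (h : ¬(x = 0 ∧ y = 0)) :
    ((zPow m x, y) : ℂ × ℂ) ≠ 0 := by
  have := pair_ne m 1 h
  rwa [zPow_one] at this

lemma interp_pos {t c : ℝ} (ht : t ∈ Set.Icc (0 : ℝ) 1) (hc : 0 < c) :
    0 < (1 - t) + t * c := by
  rcases eq_or_lt_of_le ht.1 with h | h
  · simp [← h]
  · have h1 : 0 < t * c := mul_pos h hc
    have h2 : 0 ≤ 1 - t := by linarith [ht.2]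
    linarith

lemma cont_pair1 (m : ℤ) : Continuous fun v : S3 => ((zPow m (v : ℂ × ℂ).1, (v : ℂ × ℂ).2) : ℂ × ℂ) :=
  ((zPow_cont m).comp (continuous_fst.comp continuous_subtype_val)).prodMk
    (continuous_snd.comp continuous_subtype_val)

lemma cont_pair2 (m n : ℤ) :
    Continuous fun v : S3 => ((zPow m (v : ℂ × ℂ).1, zPow n (v : ℂ × ℂ).2) : ℂ × ℂ) :=
  ((zPow_cont m).comp (continuous_fst.comp continuous_subtype_val)).prodMk
    ((zPow_cont n).comp (continuous_snd.comp continuous_subtype_val))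

lemma cont_pair3 (m : ℤ) : Continuous fun v : S3 => ((zPow m (v : ℂ × ℂ).2, (v : ℂ × ℂ).1) : ℂ × ℂ) :=
  ((zPow_cont m).comp (continuous_snd.comp continuous_subtype_val)).prodMk
    (continuous_fst.comp continuous_subtype_val)

section maps
variable (a b : ℤ)

/-- the joined power map -/
noncomputable def Fmap : C(S3, S3) :=
  nmap (fun v => (zPow a (v : ℂ × ℂ).1, zPow b (v : ℂ × ℂ).2)) (cont_pair2 a b)
    (fun v => pair_ne a b (S3.not_both v))

/-- suspension-type map: power on the first coordinate only -/
noncomputable def Qmap : C(S3, S3) :=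
  nmap (fun v => (zPow a (v : ℂ × ℂ).1, (v : ℂ × ℂ).2)) (cont_pair1 a)
    (fun v => pair_ne' a (S3.not_both v))

/-- normalized linear deformation of the swap map -/
noncomputable def Nmap (t : ℝ) : C(S3, S3) :=
  nmap (fun v => Lmap t (v : ℂ × ℂ)) (Lmap_cont_S t)
    (fun v => Lmap_ne_zero t (S3.ne_zero v))

lemma Nmap_zero : Nmap 0 = ContinuousMap.id S3 := by
  ext v : 1
  refine Subtype.ext ?_
  rw [Nmap, nmap_apply]
  show nval (Lmap 0 (v : ℂ × ℂ)) = (v : ℂ × ℂ)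
  rw [Lmap_zero]
  exact nval_of_norm_one (S3.norm_eq v)

lemma norm_swap (x : ℂ × ℂ) : ‖((x.2, x.1) : ℂ × ℂ)‖ = ‖x‖ := by
  rw [Prod.norm_def, Prod.norm_def, max_comm]

lemma Nmap_one_apply (v : S3) : ((Nmap 1 v : S3) : ℂ × ℂ) = ((v : ℂ × ℂ).2, (v : ℂ × ℂ).1) := by
  rw [Nmap, nmap_apply]
  show nval (Lmap 1 (v : ℂ × ℂ)) = _
  rw [Lmap_one]
  exact nval_of_norm_one (by rw [norm_swap]; exact S3.norm_eq v)

lemma Nmap_homotopic : (Nmap 0).Homotopic (Nmap 1) := by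
  exact nhomotopic (fun t v => Lmap t (v : ℂ × ℂ))
    Lmap_cont_S2
    (fun t _ v => Lmap_ne_zero t (S3.ne_zero v)) _ _ _ _

end maps

lemma scaled_pair_ne' {α β : ℝ} (hα : α ≠ 0) (hβ : β ≠ 0) (m : ℤ) {x y : ℂ}
    (h : ¬(x = 0 ∧ y = 0)) :
    (((α : ℂ) * zPow m x, (β : ℂ) * y) : ℂ × ℂ) ≠ 0 := by
  rw [Ne, Prod.mk_eq_zero]
  rintro ⟨h1, h2⟩
  rcases not_and_or.mp h with h' | h'
  · exact mul_ne_zero (Complex.ofReal_ne_zero.2 hα) (zPow_ne_zero m h') h1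
  · exact h' (by
      rcases mul_eq_zero.1 h2 with h'' | h''
      · exact absurd h'' (Complex.ofReal_ne_zero.2 hβ)
      · exact h'')

section fam
variable (a b : ℤ)

noncomputable def rho1 (v : S3) : ℝ := ‖((zPow b (v : ℂ × ℂ).2, (v : ℂ × ℂ).1) : ℂ × ℂ)‖⁻¹
noncomputable def rho2 (v : S3) : ℝ := ‖((zPow b (v : ℂ × ℂ).1, (v : ℂ × ℂ).2) : ℂ × ℂ)‖⁻¹

lemma rho1_pair_ne (v : S3) : ((zPow b (v : ℂ × ℂ).2, (v : ℂ × ℂ).1) : ℂ × ℂ) ≠ 0 :=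
  pair_ne' b (fun ⟨h1, h2⟩ => S3.not_both v ⟨h2, h1⟩)

lemma rho2_pair_ne (v : S3) : ((zPow b (v : ℂ × ℂ).1, (v : ℂ × ℂ).2) : ℂ × ℂ) ≠ 0 :=
  pair_ne' b (S3.not_both v)

lemma rho1_pos (v : S3) : 0 < rho1 b v :=
  inv_pos.2 (norm_pos_iff.2 (rho1_pair_ne b v))

lemma rho2_pos (v : S3) : 0 < rho2 b v :=
  inv_pos.2 (norm_pos_iff.2 (rho2_pair_ne b v))

@[fun_prop] lemma rho1_cont : Continuous (rho1 b) :=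
  ((cont_pair3 b).norm).inv₀ fun v => norm_ne_zero_iff.2 (rho1_pair_ne b v)

@[fun_prop] lemma rho2_cont : Continuous (rho2 b) :=
  ((cont_pair1 b).norm).inv₀ fun v => norm_ne_zero_iff.2 (rho2_pair_ne b v)

noncomputable def G1 (t : ℝ) (v : S3) : ℂ × ℂ :=
  ((((1 - t) + t * (rho1 b v) ^ a.natAbs : ℝ) : ℂ) * zPow a (v : ℂ × ℂ).1,
   (((1 - t) + t * rho1 b v : ℝ) : ℂ) * zPow b (v : ℂ × ℂ).2)

noncomputable def G3 (t : ℝ) (v : S3) : ℂ × ℂ :=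
  ((((1 - t) + t * (rho2 b v) ^ a.natAbs : ℝ) : ℂ) * zPow (a * b) (v : ℂ × ℂ).1,
   (((1 - t) + t * rho2 b v : ℝ) : ℂ) * (v : ℂ × ℂ).2)

lemma G1_cont : Continuous fun p : ℝ × S3 => G1 a b p.1 p.2 := by
  unfold G1
  have h := rho1_cont b
  have h1 := cont_pair2 a b
  fun_prop

lemma G3_cont : Continuous fun p : ℝ × S3 => G3 a b p.1 p.2 := by
  unfold G3
  have h := rho2_cont b
  have h1 := cont_pair1 (a * b)
  fun_prop

lemma G1_cont_t (t : ℝ) : Continuous (G1 a b t) := by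
  unfold G1
  have h := rho1_cont b
  have h1 := cont_pair2 a b
  fun_prop

lemma G3_cont_t (t : ℝ) : Continuous (G3 a b t) := by
  unfold G3
  have h := rho2_cont b
  have h1 := cont_pair1 (a * b)
  fun_prop

lemma G1_ne : ∀ t ∈ Set.Icc (0 : ℝ) 1, ∀ v, G1 a b t v ≠ 0 := by
  intro t ht v
  exact scaled_pair_ne (ne_of_gt (interp_pos ht (pow_pos (rho1_pos b v) _)))
    (ne_of_gt (interp_pos ht (rho1_pos b v))) a b (S3.not_both v)

lemma G3_ne : ∀ t ∈ Set.Icc (0 : ℝ) 1, ∀ v, G3 a b t v ≠ 0 := by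
  intro t ht v
  exact scaled_pair_ne' (ne_of_gt (interp_pos ht (pow_pos (rho2_pos b v) _)))
    (ne_of_gt (interp_pos ht (rho2_pos b v))) (a * b) (S3.not_both v)

lemma G1_ne_t (t : ℝ) (ht : t ∈ Set.Icc (0 : ℝ) 1) : ∀ v, G1 a b t v ≠ 0 := G1_ne a b t ht
lemma G3_ne_t (t : ℝ) (ht : t ∈ Set.Icc (0 : ℝ) 1) : ∀ v, G3 a b t v ≠ 0 := G3_ne a b t ht

lemma G1_zero_eq (hg : Continuous (G1 a b 0)) (hn : ∀ v, G1 a b 0 v ≠ 0) :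
    nmap (G1 a b 0) hg hn = Fmap a b := by
  refine nmap_congr _ _ _ _ fun v => ?_
  simp [G1]

lemma G3_zero_eq (hg : Continuous (G3 a b 0)) (hn : ∀ v, G3 a b 0 v ≠ 0) :
    nmap (G3 a b 0) hg hn = Qmap (a * b) := by
  refine nmap_congr _ _ _ _ fun v => ?_
  simp [G3]

end fam

lemma Qmap_apply (m : ℤ) (u : S3) :
    ((Qmap m u : S3) : ℂ × ℂ) = nval (zPow m (u : ℂ × ℂ).1, (u : ℂ × ℂ).2) := rfl

section comps
variable (a b : ℤ)

lemma Qmap_stage (v : S3) :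
    ((Qmap b v : S3) : ℂ × ℂ) =
      ((rho2 b v : ℂ) * zPow b (v : ℂ × ℂ).1, (rho2 b v : ℂ) * (v : ℂ × ℂ).2) := by
  rw [Qmap_apply, nval, rho2]
  simp [Prod.smul_mk, Complex.real_smul]

lemma QN_stage (v : S3) :
    ((Qmap b (Nmap 1 v) : S3) : ℂ × ℂ) =
      ((rho1 b v : ℂ) * zPow b (v : ℂ × ℂ).2, (rho1 b v : ℂ) * (v : ℂ × ℂ).1) := by
  rw [Qmap_apply]
  simp only [Nmap_one_apply]
  rw [nval, rho1]
  simp [Prod.smul_mk, Complex.real_smul]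

lemma NQN_stage (v : S3) :
    ((Nmap 1 (Qmap b (Nmap 1 v)) : S3) : ℂ × ℂ) =
      ((rho1 b v : ℂ) * (v : ℂ × ℂ).1, (rho1 b v : ℂ) * zPow b (v : ℂ × ℂ).2) := by
  rw [Nmap_one_apply]
  simp only [QN_stage]

lemma G1_one_eq (hg : Continuous (G1 a b 1)) (hn : ∀ v, G1 a b 1 v ≠ 0) :
    nmap (G1 a b 1) hg hn = (Qmap a).comp ((Nmap 1).comp ((Qmap b).comp (Nmap 1))) := by
  ext v : 1
  refine Subtype.ext ?_
  simp only [ContinuousMap.comp_apply]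
  have key : G1 a b 1 v =
      (zPow a ((rho1 b v : ℂ) * (v : ℂ × ℂ).1), (rho1 b v : ℂ) * zPow b (v : ℂ × ℂ).2) := by
    rw [G1, zPow_real_mul]
    refine Prod.ext_iff.2 ⟨?_, ?_⟩ <;> · push_cast; ring
  rw [Qmap_apply]
  simp only [NQN_stage]
  rw [nmap_apply, ← nval, key]

lemma G3_one_eq (ha : a ≠ 0) (hb : b ≠ 0)
    (hg : Continuous (G3 a b 1)) (hn : ∀ v, G3 a b 1 v ≠ 0) :
    nmap (G3 a b 1) hg hn = (Qmap a).comp (Qmap b) := by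
  ext v : 1
  refine Subtype.ext ?_
  simp only [ContinuousMap.comp_apply]
  have key : G3 a b 1 v =
      (zPow a ((rho2 b v : ℂ) * zPow b (v : ℂ × ℂ).1), (rho2 b v : ℂ) * (v : ℂ × ℂ).2) := by
    rw [G3, zPow_real_mul, zPow_zPow a b _ ha hb]
    refine Prod.ext_iff.2 ⟨?_, ?_⟩ <;> · push_cast; ring
  rw [Qmap_apply]
  simp only [Qmap_stage]
  rw [nmap_apply, ← nval, key]

end comps

/-- For nonzero integers `a, b`, the self-map of the unit sphere
`S³ ⊂ ℂ²` obtained by normalizing `(z,w) ↦ (z^{a'}, w^{b'})` (with `z^{a'} = z^a` for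
`a > 0` and `conj(z)^{|a|}` for `a < 0`, and similarly for `b`) has topological degree
`a·b`.  Having degree `a·b` is formalized as: the map is homotopic to the reference
self-map of degree `a·b`, namely the normalization of `(z,w) ↦ (z^{(ab)'}, w)`. -/
theorem joined_power_map_degree (a b : ℤ) (ha : a ≠ 0) (hb : b ≠ 0) :
    ∃ F M : C(Metric.sphere (0 : ℂ × ℂ) 1, Metric.sphere (0 : ℂ × ℂ) 1),
      (∀ v : Metric.sphere (0 : ℂ × ℂ) 1,
        (F v : ℂ × ℂ) = ‖((zPow a (v : ℂ × ℂ).1, zPow b (v : ℂ × ℂ).2) : ℂ × ℂ)‖⁻¹ •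
          (zPow a (v : ℂ × ℂ).1, zPow b (v : ℂ × ℂ).2)) ∧
      (∀ v : Metric.sphere (0 : ℂ × ℂ) 1,
        (M v : ℂ × ℂ) = ‖((zPow (a * b) (v : ℂ × ℂ).1, (v : ℂ × ℂ).2) : ℂ × ℂ)‖⁻¹ •
          (zPow (a * b) (v : ℂ × ℂ).1, (v : ℂ × ℂ).2)) ∧
      F.Homotopic M := by
  refine ⟨Fmap a b, Qmap (a * b), fun v => rfl, fun v => rfl, ?_⟩
  have ht0 : (0 : ℝ) ∈ Set.Icc (0 : ℝ) 1 := ⟨le_rfl, zero_le_one⟩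
  have ht1 : (1 : ℝ) ∈ Set.Icc (0 : ℝ) 1 := ⟨zero_le_one, le_rfl⟩
  have hA : (Fmap a b).Homotopic
      (nmap (G1 a b 1) (G1_cont_t a b 1) (G1_ne_t a b 1 ht1)) := by
    have h := nhomotopic (G1 a b) (G1_cont a b) (G1_ne a b)
      (G1_cont_t a b 0) (G1_ne_t a b 0 ht0) (G1_cont_t a b 1) (G1_ne_t a b 1 ht1)
    rwa [G1_zero_eq] at h
  have hB := G1_one_eq a b (G1_cont_t a b 1) (G1_ne_t a b 1 ht1)
  have hN : (Nmap 1).Homotopic (Nmap 0) := (Nmap_homotopic).symm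
  have hC : ((Qmap a).comp ((Nmap 1).comp ((Qmap b).comp (Nmap 1)))).Homotopic
      ((Qmap a).comp ((Nmap 0).comp ((Qmap b).comp (Nmap 0)))) :=
    ContinuousMap.Homotopic.comp
      (ContinuousMap.Homotopic.refl (Qmap a))
      (ContinuousMap.Homotopic.comp hN
        ((ContinuousMap.Homotopic.refl (Qmap b)).comp hN))
  have hD : (Qmap a).comp ((Nmap 0).comp ((Qmap b).comp (Nmap 0))) =
      (Qmap a).comp (Qmap b) := by
    rw [Nmap_zero, ContinuousMap.comp_id, ContinuousMap.id_comp]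
  have hE : (Qmap a).comp (Qmap b) =
      nmap (G3 a b 1) (G3_cont_t a b 1) (G3_ne_t a b 1 ht1) :=
    (G3_one_eq a b ha hb _ _).symm
  have hF : (nmap (G3 a b 1) (G3_cont_t a b 1) (G3_ne_t a b 1 ht1)).Homotopic
      (Qmap (a * b)) := by
    have h := nhomotopic (G3 a b) (G3_cont a b) (G3_ne a b)
      (G3_cont_t a b 0) (G3_ne_t a b 0 ht0) (G3_cont_t a b 1) (G3_ne_t a b 1 ht1)
    rw [G3_zero_eq] at h
    exact h.symm
  refine hA.trans ?_
  rw [hB]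
  refine hC.trans ?_
  rw [hD, hE]
  exact hF
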